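/- arXiv:1403.1374 — 2 statements merged into one kernel-verified Lean document; each statement's English description precedes it below -/
import Mathlib

section
/- Minkowski's question mark function q is strictly increasing on [0,1]. -/
/-- The self-similarity operator for Minkowski's question mark function. -/
noncomputable def minkT (f : ℝ → ℝ) : ℝ → ℝ := fun x =>
  if x ≤ 1/2 then (1/2) * f (x / (1 - x)) else 1 - (1/2) * f ((1 - x) / x)

/-- Minkowski's question mark function, obtained as the (uniform) limit of the
iteration of `minkT` starting from the identity distribution function. -/
noncomputable def minkQ : ℝ → ℝ := fun x =>
  Filter.limUnder Filter.atTop (fun n => (minkT^[n] id) x)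

open Filter Set

lemma arg1_mem {x : ℝ} (h0 : 0 ≤ x) (h2 : x ≤ 1/2) : x / (1 - x) ∈ Icc (0:ℝ) 1 := by
  constructor
  · exact div_nonneg h0 (by linarith)
  · rw [div_le_one (by linarith)]; linarith

lemma arg2_mem {x : ℝ} (h2 : 1/2 < x) (h1 : x ≤ 1) : (1 - x) / x ∈ Icc (0:ℝ) 1 := by
  constructor
  · apply div_nonneg <;> linarith
  · rw [div_le_one (by linarith)]; linarith

lemma minkT_mem {f : ℝ → ℝ} (hf : ∀ t ∈ Icc (0:ℝ) 1, f t ∈ Icc (0:ℝ) 1) :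
    ∀ x ∈ Icc (0:ℝ) 1, minkT f x ∈ Icc (0:ℝ) 1 := by
  intro x hx
  unfold minkT
  by_cases h : x ≤ 1/2
  · rw [if_pos h]
    have := hf _ (arg1_mem hx.1 h)
    constructor <;> [nlinarith [this.1]; nlinarith [this.2]]
  · rw [if_neg h]
    push_neg at h
    have := hf _ (arg2_mem h hx.2)
    constructor <;> [nlinarith [this.2]; nlinarith [this.1]]

lemma minkF_mem (n : ℕ) : ∀ x ∈ Icc (0:ℝ) 1, (minkT^[n] id) x ∈ Icc (0:ℝ) 1 := by
  induction n with
  | zero => intro x hx; simpa using hx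
  | succ n ih =>
      intro x hx
      rw [Function.iterate_succ_apply']
      exact minkT_mem ih x hx

lemma minkT_contr {f g : ℝ → ℝ} {c : ℝ} (h : ∀ t ∈ Icc (0:ℝ) 1, |f t - g t| ≤ c) :
    ∀ x ∈ Icc (0:ℝ) 1, |minkT f x - minkT g x| ≤ c / 2 := by
  intro x hx
  by_cases hx2 : x ≤ 1/2
  · simp only [minkT, if_pos hx2]
    have := h _ (arg1_mem hx.1 hx2)
    rw [← mul_sub, abs_mul]
    rw [abs_of_nonneg (by norm_num : (0:ℝ) ≤ 1/2)]
    linarith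
  · simp only [minkT, if_neg hx2]
    push_neg at hx2
    have := h _ (arg2_mem hx2 hx.2)
    have heq : 1 - 1/2 * f ((1-x)/x) - (1 - 1/2 * g ((1-x)/x))
        = -(1/2 * (f ((1-x)/x) - g ((1-x)/x))) := by ring
    rw [heq, abs_neg, abs_mul, abs_of_nonneg (by norm_num : (0:ℝ) ≤ 1/2)]
    linarith

lemma minkF_dist (n : ℕ) : ∀ x ∈ Icc (0:ℝ) 1,
    |(minkT^[n+1] id) x - (minkT^[n] id) x| ≤ (1/2)^n := by
  induction n with
  | zero =>
      intro x hx
      have h1 := minkF_mem 1 x hx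
      simp only [Function.iterate_zero, id] at *
      rw [abs_sub_le_iff]
      constructor <;> [nlinarith [h1.1, h1.2, hx.1, hx.2]; nlinarith [h1.1, h1.2, hx.1, hx.2]]
  | succ n ih =>
      intro x hx
      have h := minkT_contr ih x hx
      have e1 : (minkT^[n+1+1] id) x = minkT (minkT^[n+1] id) x := by
        rw [Function.iterate_succ_apply']
      have e2 : (minkT^[n+1] id) x = minkT (minkT^[n] id) x := by
        rw [Function.iterate_succ_apply']
      rw [e1, e2, pow_succ]
      linarith

lemma minkF_cauchy {x : ℝ} (hx : x ∈ Icc (0:ℝ) 1) :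
    CauchySeq (fun n => (minkT^[n] id) x) := by
  apply cauchySeq_of_le_geometric (r := 1/2) (C := 1) (by norm_num)
  intro n
  rw [Real.dist_eq, abs_sub_comm, one_mul]
  exact minkF_dist n x hx

lemma minkQ_tendsto {x : ℝ} (hx : x ∈ Icc (0:ℝ) 1) :
    Tendsto (fun n => (minkT^[n] id) x) atTop (nhds (minkQ x)) := by
  obtain ⟨L, hL⟩ := cauchySeq_tendsto_of_complete (minkF_cauchy hx)
  have : minkQ x = L := hL.limUnder_eq
  rw [this]; exact hL

lemma minkQ_mem {x : ℝ} (hx : x ∈ Icc (0:ℝ) 1) : minkQ x ∈ Icc (0:ℝ) 1 := by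
  constructor
  · exact ge_of_tendsto' (minkQ_tendsto hx) (fun n => (minkF_mem n x hx).1)
  · exact le_of_tendsto' (minkQ_tendsto hx) (fun n => (minkF_mem n x hx).2)

lemma minkQ_eq_left {x : ℝ} (h0 : 0 ≤ x) (h2 : x ≤ 1/2) :
    minkQ x = 1/2 * minkQ (x / (1 - x)) := by
  have hx : x ∈ Icc (0:ℝ) 1 := ⟨h0, by linarith⟩
  have hx' := arg1_mem h0 h2
  have h1 : Tendsto (fun n => (minkT^[n+1] id) x) atTop (nhds (minkQ x)) :=
    (minkQ_tendsto hx).comp (tendsto_add_atTop_nat 1)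
  have h2' : Tendsto (fun n => 1/2 * (minkT^[n] id) (x / (1 - x))) atTop
      (nhds (1/2 * minkQ (x / (1 - x)))) := (minkQ_tendsto hx').const_mul _
  have heq : (fun n => (minkT^[n+1] id) x) = fun n => 1/2 * (minkT^[n] id) (x / (1 - x)) := by
    funext n
    rw [Function.iterate_succ_apply']
    unfold minkT
    rw [if_pos h2]
  rw [heq] at h1
  exact tendsto_nhds_unique h1 h2'

lemma minkQ_eq_right {x : ℝ} (h2 : 1/2 < x) (h1 : x ≤ 1) :
    minkQ x = 1 - 1/2 * minkQ ((1 - x) / x) := by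
  have hx : x ∈ Icc (0:ℝ) 1 := ⟨by linarith, h1⟩
  have hx' := arg2_mem h2 h1
  have ha : Tendsto (fun n => (minkT^[n+1] id) x) atTop (nhds (minkQ x)) :=
    (minkQ_tendsto hx).comp (tendsto_add_atTop_nat 1)
  have hb : Tendsto (fun n => 1 - 1/2 * (minkT^[n] id) ((1 - x) / x)) atTop
      (nhds (1 - 1/2 * minkQ ((1 - x) / x))) :=
    (((minkQ_tendsto hx').const_mul (1/2:ℝ)).const_sub 1)
  have heq : (fun n => (minkT^[n+1] id) x) = fun n => 1 - 1/2 * (minkT^[n] id) ((1 - x) / x) := by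
    funext n
    rw [Function.iterate_succ_apply']
    unfold minkT
    rw [if_neg (by linarith)]
  rw [heq] at ha
  exact tendsto_nhds_unique ha hb

lemma minkQ_pos : ∀ n : ℕ, ∀ y : ℝ, 0 < y → y ≤ 1 → 1 ≤ (n:ℝ) * y → 0 < minkQ y := by
  intro n
  induction n with
  | zero => intro y h0 h1 hn; norm_num at hn
  | succ n ih =>
      intro y h0 h1 hn
      push_cast at hn
      by_cases h2 : y ≤ 1/2
      · rw [minkQ_eq_left h0.le h2]
        have hy' : 0 < y / (1 - y) := div_pos h0 (by linarith)
        have hy1 : y / (1 - y) ≤ 1 := by rw [div_le_one (by linarith)]; linarith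
        have hn' : 1 ≤ (n:ℝ) * (y / (1 - y)) := by
          rw [← mul_div_assoc, le_div_iff₀ (by linarith)]
          nlinarith
        have := ih _ hy' hy1 hn'
        linarith
      · push_neg at h2
        rw [minkQ_eq_right h2 h1]
        have := (minkQ_mem (arg2_mem h2 h1)).2
        linarith

lemma minkQ_pos' {y : ℝ} (h0 : 0 < y) (h1 : y ≤ 1) : 0 < minkQ y := by
  obtain ⟨n, hn⟩ := exists_nat_ge (1/y)
  exact minkQ_pos n y h0 h1 (by rw [div_le_iff₀ h0] at hn; linarith)

lemma minkQ_lt_one {x : ℝ} (h0 : 0 ≤ x) (h1 : x < 1) : minkQ x < 1 := by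
  by_cases h2 : x ≤ 1/2
  · rw [minkQ_eq_left h0 h2]
    have := (minkQ_mem (arg1_mem h0 h2)).2
    linarith
  · push_neg at h2
    rw [minkQ_eq_right h2 h1.le]
    have harg := arg2_mem h2 h1.le
    have hpos : 0 < (1-x)/x := div_pos (by linarith) (by linarith)
    have := minkQ_pos' hpos harg.2
    linarith

lemma minkQ_key : ∀ n : ℕ, ∀ x y : ℝ, x ∈ Icc (0:ℝ) 1 → y ∈ Icc (0:ℝ) 1 → x < y →
    1 ≤ (n:ℝ) * (y - x) → minkQ x < minkQ y := by
  intro n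
  induction n with
  | zero => intro x y hx hy hxy hn; norm_num at hn
  | succ n ih =>
      intro x y hx hy hxy hn
      push_cast at hn
      by_cases hy2 : y ≤ 1/2
      · have hx2 : x ≤ 1/2 := by linarith
        rw [minkQ_eq_left hx.1 hx2, minkQ_eq_left hy.1 hy2]
        have hx' := arg1_mem hx.1 hx2
        have hy' := arg1_mem hy.1 hy2
        have hlt : x/(1-x) < y/(1-y) := by
          rw [div_lt_div_iff₀ (by linarith) (by linarith)]
          nlinarith
        have hg : 1 ≤ (n:ℝ) * (y/(1-y) - x/(1-x)) := by
          have he : y/(1-y) - x/(1-x) = (y-x)/((1-x)*(1-y)) := by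
            rw [div_sub_div _ _ (by linarith : (1:ℝ)-y ≠ 0) (by linarith : (1:ℝ)-x ≠ 0)]
            rw [mul_comm (1-y) (1-x)]
            congr 1
            ring
          rw [he, ← mul_div_assoc,
            le_div_iff₀ (mul_pos (by linarith : (0:ℝ) < 1-x) (by linarith : (0:ℝ) < 1-y))]
          nlinarith [mul_nonneg hx.1 (by linarith : (0:ℝ) ≤ 2 - y)]
        have := ih _ _ hx' hy' hlt hg
        linarith
      · push_neg at hy2
        by_cases hx2 : x ≤ 1/2
        · rw [minkQ_eq_left hx.1 hx2, minkQ_eq_right hy2 hy.2]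
          have hqx := (minkQ_mem (arg1_mem hx.1 hx2)).2
          have harg := arg2_mem hy2 hy.2
          have hlt1 : minkQ ((1-y)/y) < 1 := by
            apply minkQ_lt_one harg.1
            rw [div_lt_one (by linarith)]; linarith
          linarith
        · push_neg at hx2
          rw [minkQ_eq_right hx2 hx.2, minkQ_eq_right hy2 hy.2]
          have hx' := arg2_mem hx2 hx.2
          have hy' := arg2_mem hy2 hy.2
          have hlt : (1-y)/y < (1-x)/x := by
            rw [div_lt_div_iff₀ (by linarith) (by linarith)]
            nlinarith
          have hg : 1 ≤ (n:ℝ) * ((1-x)/x - (1-y)/y) := by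
            have he : (1-x)/x - (1-y)/y = (y-x)/(x*y) := by
              rw [div_sub_div _ _ (by linarith : x ≠ 0) (by linarith : y ≠ 0)]
              congr 1
              ring
            rw [he, ← mul_div_assoc,
              le_div_iff₀ (mul_pos (by linarith : (0:ℝ) < x) (by linarith : (0:ℝ) < y))]
            nlinarith [mul_nonneg (by linarith : (0:ℝ) ≤ x) (by linarith [hy.2] : (0:ℝ) ≤ 1 - y)]
          have := ih _ _ hy' hx' hlt hg
          linarith

theorem minkQ_strictMonoOn : StrictMonoOn minkQ (Set.Icc (0:ℝ) 1) := by
  intro x hx y hy hxy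
  obtain ⟨n, hn⟩ := exists_nat_ge (1/(y-x))
  have hpos : 0 < y - x := by linarith
  exact minkQ_key n x y hx hy hxy (by rw [div_le_iff₀ hpos] at hn; nlinarith)
end

section
/- Let q_N be the empirical distribution function of the Minkowski sequence 𝓜_N, i.e. q_N(x) = (1/m_N)·#{r ∈ 𝓜_N : r ≤ x} with m_N = 2^{N-1}+1. Then sup_{x ∈ [0,1]} |q_N(x) − q(x)| ≤ 1/(2^{N-1}+1), hence q_N → q uniformly on [0,1]. -/
/-- The mediant of two rational numbers. -/
def mediant (x y : ℚ) : ℚ := ((x.num + y.num : ℤ) : ℚ) / ((x.den + y.den : ℕ) : ℚ)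

/-- Insert the mediants of all pairs of consecutive entries of a list. -/
def insertMediants : List ℚ → List ℚ
  | [] => []
  | [x] => [x]
  | x :: y :: rest => x :: mediant x y :: insertMediants (y :: rest)

/-- The Minkowski sequence: `minkSeq (N - 1)` is the sorted list of elements of `𝓜_N`,
with `𝓜_1 = (0, 1)`. -/
def minkSeq : ℕ → List ℚ
  | 0 => [0, 1]
  | n + 1 => insertMediants (minkSeq n)

open Classical in
/-- The empirical distribution function of the Minkowski sequence `𝓜_N = minkSeq (N-1)`. -/
noncomputable def empQ (N : ℕ) (x : ℝ) : ℝ :=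
  ((minkSeq (N - 1)).countP (fun r => decide ((r : ℝ) ≤ x))) / (2 ^ (N - 1) + 1)

open Filter Set

namespace MinkAux

noncomputable def F (n : ℕ) : ℝ → ℝ := minkT^[n] id

lemma F_succ (n : ℕ) : F (n+1) = minkT (F n) := Function.iterate_succ_apply' _ _ _

lemma aux_mem1 {x : ℝ} (h0 : 0 ≤ x) (h1 : x ≤ 1/2) : x / (1 - x) ∈ Icc (0:ℝ) 1 := by
  constructor
  · exact div_nonneg h0 (by linarith)
  · rw [div_le_one (by linarith)]; linarith

lemma aux_mem2 {x : ℝ} (h0 : 1/2 < x) (h1 : x ≤ 1) : (1 - x) / x ∈ Icc (0:ℝ) 1 := by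
  constructor
  · apply div_nonneg <;> linarith
  · rw [div_le_one (by linarith)]; linarith

lemma minkT_mem {f : ℝ → ℝ} (hf : ∀ y ∈ Icc (0:ℝ) 1, f y ∈ Icc (0:ℝ) 1)
    {x : ℝ} (hx : x ∈ Icc (0:ℝ) 1) : minkT f x ∈ Icc (0:ℝ) 1 := by
  obtain ⟨h0, h1⟩ := hx
  unfold minkT
  split_ifs with h
  · obtain ⟨a, b⟩ := hf _ (aux_mem1 h0 h)
    constructor <;> [linarith; linarith]
  · push_neg at h
    obtain ⟨a, b⟩ := hf _ (aux_mem2 h h1)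
    constructor <;> [linarith; linarith]

lemma F_mem (n : ℕ) : ∀ x ∈ Icc (0:ℝ) 1, F n x ∈ Icc (0:ℝ) 1 := by
  induction n with
  | zero => intro x hx; simpa [F] using hx
  | succ n ih => intro x hx; rw [F_succ]; exact minkT_mem ih hx

lemma minkT_dist {C : ℝ} {f g : ℝ → ℝ} (h : ∀ y ∈ Icc (0:ℝ) 1, |f y - g y| ≤ C)
    {x : ℝ} (hx : x ∈ Icc (0:ℝ) 1) : |minkT f x - minkT g x| ≤ C/2 := by
  obtain ⟨h0, h1⟩ := hx
  simp only [minkT]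
  split_ifs with hc
  · have hh := h _ (aux_mem1 h0 hc)
    set y := x / (1-x)
    have e : (1/2)*f y - (1/2)*g y = (1/2)*(f y - g y) := by ring
    rw [e, abs_mul, abs_of_nonneg (by norm_num : (0:ℝ) ≤ 1/2)]
    linarith
  · push_neg at hc
    have hh := h _ (aux_mem2 hc h1)
    set y := (1-x)/x
    have e : (1 - 1/2 * f y) - (1 - 1/2 * g y) = -((1/2)*(f y - g y)) := by ring
    rw [e, abs_neg, abs_mul, abs_of_nonneg (by norm_num : (0:ℝ) ≤ 1/2)]
    linarith

lemma F_diff (n : ℕ) : ∀ x ∈ Icc (0:ℝ) 1, |F (n+1) x - F n x| ≤ (1/2)^n := by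
  induction n with
  | zero =>
    intro x hx
    obtain ⟨a, b⟩ := F_mem 1 x hx
    obtain ⟨c, d⟩ := F_mem 0 x hx
    rw [abs_le]; constructor <;> [linarith; linarith]
  | succ n ih =>
    intro x hx
    have h2 := minkT_dist ih hx
    rw [← F_succ, ← F_succ] at h2
    calc |F (n+1+1) x - F (n+1) x| ≤ (1/2)^n / 2 := h2
      _ = (1/2)^(n+1) := by ring

lemma F_cauchy {x : ℝ} (hx : x ∈ Icc (0:ℝ) 1) : CauchySeq (fun n => F n x) := by
  apply cauchySeq_of_le_geometric (1/2) 1 (by norm_num)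
  intro n
  rw [Real.dist_eq, abs_sub_comm]
  simpa using F_diff n x hx

lemma tendsto_F_minkQ {x : ℝ} (hx : x ∈ Icc (0:ℝ) 1) :
    Tendsto (fun n => F n x) atTop (nhds (minkQ x)) := by
  obtain ⟨L, hL⟩ := cauchySeq_tendsto_of_complete (F_cauchy hx)
  have : minkQ x = L := hL.limUnder_eq
  rw [this]; exact hL

lemma minkQ_mem {x : ℝ} (hx : x ∈ Icc (0:ℝ) 1) : minkQ x ∈ Icc (0:ℝ) 1 := by
  constructor
  · exact le_of_tendsto_of_tendsto tendsto_const_nhds (tendsto_F_minkQ hx)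
      (Filter.Eventually.of_forall fun n => (F_mem n x hx).1)
  · exact le_of_tendsto_of_tendsto (tendsto_F_minkQ hx) tendsto_const_nhds
      (Filter.Eventually.of_forall fun n => (F_mem n x hx).2)

lemma F_zero (n : ℕ) : F n 0 = 0 := by
  induction n with
  | zero => simp [F]
  | succ n ih => rw [F_succ]; simp [minkT, ih]

lemma F_one (n : ℕ) : F n 1 = 1 := by
  induction n with
  | zero => simp [F]
  | succ n ih => rw [F_succ]; norm_num [minkT, F_zero n]

lemma minkQ_zero : minkQ 0 = 0 :=
  tendsto_nhds_unique (tendsto_F_minkQ (by norm_num)) (by simp [F_zero, tendsto_const_nhds])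

lemma minkQ_one : minkQ 1 = 1 :=
  tendsto_nhds_unique (tendsto_F_minkQ (by norm_num)) (by simp [F_one, tendsto_const_nhds])

lemma F_mono (n : ℕ) : ∀ x ∈ Icc (0:ℝ) 1, ∀ y ∈ Icc (0:ℝ) 1, x ≤ y → F n x ≤ F n y := by
  induction n with
  | zero => intro x _ y _ h; simpa [F] using h
  | succ n ih =>
    intro x hx y hy hxy
    rw [F_succ]
    simp only [minkT]
    obtain ⟨hx0, hx1⟩ := hx
    obtain ⟨hy0, hy1⟩ := hy
    split_ifs with h1 h2 h2
    · have harg : x / (1-x) ≤ y / (1-y) := by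
        rw [div_le_div_iff₀ (by linarith) (by linarith)]; nlinarith
      have := ih _ (aux_mem1 hx0 h1) _ (aux_mem1 hy0 h2) harg
      linarith
    · push_neg at h2
      have a := (F_mem n _ (aux_mem1 hx0 h1)).2
      have b := (F_mem n _ (aux_mem2 h2 hy1)).2
      linarith
    · exact absurd (hxy.trans h2) h1
    · push_neg at h1 h2
      have harg : (1-y)/y ≤ (1-x)/x := by
        rw [div_le_div_iff₀ (by linarith) (by linarith)]; nlinarith
      have := ih _ (aux_mem2 h2 hy1) _ (aux_mem2 h1 hx1) harg
      linarith

lemma minkQ_mono {x y : ℝ} (hx : x ∈ Icc (0:ℝ) 1) (hy : y ∈ Icc (0:ℝ) 1) (hxy : x ≤ y) :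
    minkQ x ≤ minkQ y :=
  le_of_tendsto_of_tendsto (tendsto_F_minkQ hx) (tendsto_F_minkQ hy)
    (Filter.Eventually.of_forall fun n => F_mono n x hx y hy hxy)

lemma F_symm (n : ℕ) : ∀ x ∈ Icc (0:ℝ) 1, F n (1 - x) = 1 - F n x := by
  induction n with
  | zero => intro x _; simp [F]
  | succ n _ =>
    intro x hx
    obtain ⟨h0, h1⟩ := hx
    rw [F_succ]
    simp only [minkT]
    rcases lt_trichotomy x (1/2) with h | h | h
    · rw [if_neg (by linarith : ¬ (1 - x ≤ 1/2)), if_pos h.le]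
      have : (1 - (1-x))/(1-x) = x/(1-x) := by rw [sub_sub_cancel]
      rw [this]; try ring
    · rw [if_pos (by linarith), if_pos (by linarith)]
      have e1 : (1:ℝ) - x = 1/2 := by rw [h]; norm_num
      rw [e1, h]
      norm_num [F_one n]
    · rw [if_pos (by linarith : 1 - x ≤ 1/2), if_neg (by linarith : ¬ (x ≤ 1/2))]
      have : (1:ℝ) - (1 - x) = x := by ring
      rw [this]; try ring

lemma minkQ_symm {x : ℝ} (hx : x ∈ Icc (0:ℝ) 1) : minkQ (1 - x) = 1 - minkQ x := by
  have hx' : (1:ℝ) - x ∈ Icc (0:ℝ) 1 := ⟨by linarith [hx.2], by linarith [hx.1]⟩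
  refine tendsto_nhds_unique (tendsto_F_minkQ hx') ?_
  have : (fun n => F n (1 - x)) = fun n => 1 - F n x :=
    funext fun n => F_symm n x hx
  rw [this]
  exact tendsto_const_nhds.sub (tendsto_F_minkQ hx)

lemma minkQ_left {x : ℝ} (h0 : 0 ≤ x) (h1 : x ≤ 1/2) :
    minkQ x = (1/2) * minkQ (x / (1 - x)) := by
  have hx : x ∈ Icc (0:ℝ) 1 := ⟨h0, by linarith⟩
  have hm := aux_mem1 h0 h1
  refine tendsto_nhds_unique ?_ (tendsto_const_nhds.mul (tendsto_F_minkQ hm))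
  have : (fun n => (1/2 : ℝ) * F n (x/(1-x))) = fun n => F (n+1) x := by
    funext n
    simp only [F_succ, minkT]
    rw [if_pos h1]
  rw [this]
  exact (tendsto_F_minkQ hx).comp (tendsto_add_atTop_nat 1)

lemma minkQ_right {x : ℝ} (h0 : 1/2 ≤ x) (h1 : x ≤ 1) :
    minkQ x = 1 - (1/2) * minkQ ((1 - x) / x) := by
  rcases eq_or_lt_of_le h0 with h | h
  · rw [← h]
    norm_num [minkQ_left (by norm_num : (0:ℝ) ≤ 1/2) le_rfl, minkQ_one]
  · have hx : x ∈ Icc (0:ℝ) 1 := ⟨by linarith, h1⟩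
    have hm := aux_mem2 h h1
    refine tendsto_nhds_unique ?_ (tendsto_const_nhds.sub (tendsto_const_nhds.mul (tendsto_F_minkQ hm)))
    have : (fun n => (1:ℝ) - (1/2) * F n ((1-x)/x)) = fun n => F (n+1) x := by
      funext n
      simp only [F_succ, minkT]
      rw [if_neg (not_le.mpr h)]
    rw [this]
    exact (tendsto_F_minkQ hx).comp (tendsto_add_atTop_nat 1)

end MinkAux

namespace MinkAux

def Lq (x : ℚ) : ℚ := x / (1 + x)
def Rq (x : ℚ) : ℚ := 1 / (2 - x)

lemma num_le_den {x : ℚ} (h : x ≤ 1) : x.num ≤ (x.den : ℤ) := by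
  have hd : (0:ℚ) < (x.den : ℚ) := by exact_mod_cast x.pos
  have := Rat.num_div_den x
  have h2 : (x.num : ℚ) ≤ (x.den : ℚ) := by
    rw [← this] at h
    rw [div_le_one hd] at h
    exact h
  exact_mod_cast h2

lemma Lq_eq {x : ℚ} (h : 0 ≤ x) :
    Lq x = (x.num : ℚ) / (((x.num + (x.den : ℤ)) : ℤ) : ℚ) := by
  have hd : ((x.den : ℚ)) ≠ 0 := by
    have := x.pos; positivity
  have hnum : (x.num : ℚ) = x * (x.den : ℚ) := (Rat.mul_den_eq_num x).symm
  have h1 : (1:ℚ) + x ≠ 0 := by positivity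
  have hnn : (0:ℤ) ≤ x.num := Rat.num_nonneg.mpr h
  have h2 : ((x.num + (x.den:ℤ) : ℤ) : ℚ) ≠ 0 := by
    have : (0:ℤ) < x.num + x.den := by
      have := x.pos; omega
    exact_mod_cast this.ne'
  rw [Lq]
  push_cast
  rw [div_eq_div_iff h1 (by push_cast at h2 ⊢; exact h2)]
  nlinarith [hnum]

lemma Lq_num {x : ℚ} (h : 0 ≤ x) : (Lq x).num = x.num := by
  have hnn : (0:ℤ) ≤ x.num := Rat.num_nonneg.mpr h
  have hb : (0:ℤ) < x.num + x.den := by have := x.pos; omega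
  rw [Lq_eq h]
  apply Rat.num_div_eq_of_coprime hb
  have : (x.num + (x.den:ℤ)).natAbs = x.num.natAbs + x.den := by
    rw [Int.natAbs_add_of_nonneg hnn (by positivity)]; simp
  rw [this, Nat.add_comm]
  exact (Nat.coprime_add_self_right).mpr x.reduced

lemma Lq_den {x : ℚ} (h : 0 ≤ x) : ((Lq x).den : ℤ) = x.num + x.den := by
  have hnn : (0:ℤ) ≤ x.num := Rat.num_nonneg.mpr h
  have hb : (0:ℤ) < x.num + x.den := by have := x.pos; omega
  rw [Lq_eq h]
  apply Rat.den_div_eq_of_coprime hb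
  have : (x.num + (x.den:ℤ)).natAbs = x.num.natAbs + x.den := by
    rw [Int.natAbs_add_of_nonneg hnn (by positivity)]; simp
  rw [this, Nat.add_comm]
  exact (Nat.coprime_add_self_right).mpr x.reduced

lemma Rq_eq {x : ℚ} (h1 : x ≤ 1) :
    Rq x = ((x.den : ℤ) : ℚ) / (((2 * (x.den:ℤ) - x.num) : ℤ) : ℚ) := by
  have hd : ((x.den : ℚ)) ≠ 0 := by have := x.pos; positivity
  have hnum : (x.num : ℚ) = x * (x.den : ℚ) := (Rat.mul_den_eq_num x).symm
  have hle : x.num ≤ (x.den : ℤ) := num_le_den h1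
  have hpos : (0:ℤ) < 2 * (x.den:ℤ) - x.num := by have := x.pos; omega
  have h2 : (((2 * (x.den:ℤ) - x.num) : ℤ) : ℚ) ≠ 0 := by exact_mod_cast hpos.ne'
  have h3 : (2:ℚ) - x ≠ 0 := by
    have : x ≤ 1 := h1
    intro hc
    have : x = 2 := by linarith
    rw [this] at h1; norm_num at h1
  rw [Rq]
  push_cast
  rw [div_eq_div_iff h3 (by push_cast at h2 ⊢; exact h2)]
  nlinarith [hnum]

lemma Rq_coprime {x : ℚ} (h0 : 0 ≤ x) (h1 : x ≤ 1) :
    ((x.den : ℤ)).natAbs.Coprime ((2 * (x.den:ℤ) - x.num) : ℤ).natAbs := by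
  have hnn : (0:ℤ) ≤ x.num := Rat.num_nonneg.mpr h0
  have hle : x.num ≤ (x.den : ℤ) := num_le_den h1
  set a : ℕ := x.num.toNat with ha
  have hna : x.num = (a : ℤ) := (Int.toNat_of_nonneg hnn).symm
  have haled : a ≤ x.den := by omega
  have e1 : ((x.den : ℤ)).natAbs = x.den := Int.natAbs_natCast _
  have e2 : ((2 * (x.den:ℤ) - x.num) : ℤ).natAbs = 2 * x.den - a := by
    rw [hna]
    have : (2 * (x.den:ℤ) - (a:ℤ)) = ((2 * x.den - a : ℕ) : ℤ) := by
      push_cast [Nat.cast_sub (by omega : a ≤ 2 * x.den)]; ring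
    rw [this, Int.natAbs_natCast]
  rw [e1, e2]
  have e3 : 2 * x.den - a = (x.den - a) + x.den := by omega
  rw [e3]
  rw [Nat.coprime_add_self_right]
  rw [Nat.coprime_self_sub_right haled]
  have e4 : x.num.natAbs = a := by omega
  have h5 := x.reduced
  rw [e4] at h5
  exact Nat.Coprime.symm h5

lemma Rq_num {x : ℚ} (h0 : 0 ≤ x) (h1 : x ≤ 1) : (Rq x).num = (x.den : ℤ) := by
  have hle : x.num ≤ (x.den : ℤ) := num_le_den h1
  have hpos : (0:ℤ) < 2 * (x.den:ℤ) - x.num := by have := x.pos; omega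
  rw [Rq_eq h1]
  exact Rat.num_div_eq_of_coprime hpos (Rq_coprime h0 h1)

lemma Rq_den {x : ℚ} (h0 : 0 ≤ x) (h1 : x ≤ 1) : ((Rq x).den : ℤ) = 2 * (x.den:ℤ) - x.num := by
  have hle : x.num ≤ (x.den : ℤ) := num_le_den h1
  have hpos : (0:ℤ) < 2 * (x.den:ℤ) - x.num := by have := x.pos; omega
  rw [Rq_eq h1]
  exact Rat.den_div_eq_of_coprime hpos (Rq_coprime h0 h1)

end MinkAux

namespace MinkAux

lemma med_eq (x y : ℚ) :
    mediant x y = ((x.num : ℚ) + (y.num : ℚ)) / ((x.den : ℚ) + (y.den : ℚ)) := by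
  rw [mediant]; push_cast; ring_nf

lemma num_nonneg' {x : ℚ} (h : 0 ≤ x) : (0:ℚ) ≤ (x.num : ℚ) := by
  exact_mod_cast Rat.num_nonneg.mpr h

lemma den_pos' (x : ℚ) : (0:ℚ) < (x.den : ℚ) := by exact_mod_cast x.pos

lemma num_le_den' {x : ℚ} (h : x ≤ 1) : (x.num : ℚ) ≤ (x.den : ℚ) := by
  exact_mod_cast num_le_den h

lemma med_mem {x y : ℚ} (hx0 : 0 ≤ x) (hx1 : x ≤ 1) (hy0 : 0 ≤ y) (hy1 : y ≤ 1) :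
    0 ≤ mediant x y ∧ mediant x y ≤ 1 := by
  rw [med_eq]
  have hA := num_nonneg' hx0
  have hC := num_nonneg' hy0
  have hB := den_pos' x
  have hD := den_pos' y
  have hAB := num_le_den' hx1
  have hCD := num_le_den' hy1
  constructor
  · positivity
  · rw [div_le_one (by linarith)]; linarith

lemma med_L {x y : ℚ} (hx0 : 0 ≤ x) (hy0 : 0 ≤ y) :
    mediant (Lq x) (Lq y) = Lq (mediant x y) := by
  have hA := num_nonneg' hx0
  have hC := num_nonneg' hy0
  have hB := den_pos' x
  have hD := den_pos' y
  have d1 : ((Lq x).den : ℚ) = (x.num:ℚ) + (x.den:ℚ) := by exact_mod_cast Lq_den hx0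
  have d2 : ((Lq y).den : ℚ) = (y.num:ℚ) + (y.den:ℚ) := by exact_mod_cast Lq_den hy0
  have hm0 : 0 ≤ mediant x y := by
    rw [med_eq]; positivity
  rw [med_eq (Lq x) (Lq y), Lq_num hx0, Lq_num hy0, d1, d2, Lq, med_eq x y]
  have h1 : (0:ℚ) < (x.den:ℚ) + (y.den:ℚ) := by linarith
  have h2 : (0:ℚ) < (1 + ((x.num:ℚ) + (y.num:ℚ)) / ((x.den:ℚ) + (y.den:ℚ))) := by
    have : (0:ℚ) ≤ ((x.num:ℚ) + (y.num:ℚ)) / ((x.den:ℚ) + (y.den:ℚ)) := by positivity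
    linarith
  rw [div_eq_div_iff (by linarith) h2.ne']
  field_simp
  try ring
  all_goals tauto

lemma med_R {x y : ℚ} (hx0 : 0 ≤ x) (hx1 : x ≤ 1) (hy0 : 0 ≤ y) (hy1 : y ≤ 1) :
    mediant (Rq x) (Rq y) = Rq (mediant x y) := by
  have hA := num_nonneg' hx0
  have hC := num_nonneg' hy0
  have hB := den_pos' x
  have hD := den_pos' y
  have hAB := num_le_den' hx1
  have hCD := num_le_den' hy1
  have n1 : ((Rq x).num : ℚ) = (x.den:ℚ) := by exact_mod_cast congrArg (fun z : ℤ => (z:ℚ)) (Rq_num hx0 hx1)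
  have n2 : ((Rq y).num : ℚ) = (y.den:ℚ) := by exact_mod_cast congrArg (fun z : ℤ => (z:ℚ)) (Rq_num hy0 hy1)
  have d1 : ((Rq x).den : ℚ) = 2*(x.den:ℚ) - (x.num:ℚ) := by exact_mod_cast Rq_den hx0 hx1
  have d2 : ((Rq y).den : ℚ) = 2*(y.den:ℚ) - (y.num:ℚ) := by exact_mod_cast Rq_den hy0 hy1
  rw [med_eq (Rq x) (Rq y), n1, n2, d1, d2, Rq, med_eq x y]
  have h1 : (0:ℚ) < 2*(x.den:ℚ) - x.num + (2*(y.den:ℚ) - y.num) := by linarith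
  have h2 : (0:ℚ) < 2 - ((x.num:ℚ) + (y.num:ℚ)) / ((x.den:ℚ) + (y.den:ℚ)) := by
    have : ((x.num:ℚ) + (y.num:ℚ)) / ((x.den:ℚ) + (y.den:ℚ)) ≤ 1 := by
      rw [div_le_one (by linarith)]; linarith
    linarith
  rw [div_eq_div_iff (by linarith) h2.ne']
  field_simp
  ring

lemma med_LR {y : ℚ} (hy0 : 0 ≤ y) (hy1 : y ≤ 1) :
    mediant (Lq 1) (Rq y) = Rq (mediant 0 y) := by
  have hC := num_nonneg' hy0
  have hD := den_pos' y
  have hCD := num_le_den' hy1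
  have n1 : ((Lq 1).num : ℚ) = 1 := by
    rw [Lq_num (by norm_num : (0:ℚ) ≤ 1)]; norm_num
  have d1 : ((Lq 1).den : ℚ) = 2 := by
    have := Lq_den (by norm_num : (0:ℚ) ≤ 1)
    have h2 : ((Lq 1).den : ℤ) = 2 := by simpa using this
    exact_mod_cast h2
  have n2 : ((Rq y).num : ℚ) = (y.den:ℚ) := by exact_mod_cast congrArg (fun z : ℤ => (z:ℚ)) (Rq_num hy0 hy1)
  have d2 : ((Rq y).den : ℚ) = 2*(y.den:ℚ) - (y.num:ℚ) := by exact_mod_cast Rq_den hy0 hy1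
  have e0 : mediant 0 y = (y.num : ℚ) / (1 + (y.den:ℚ)) := by
    rw [med_eq]; norm_num
  rw [med_eq (Lq 1) (Rq y), n1, d1, n2, d2, Rq, e0]
  have h2 : (0:ℚ) < 2 - (y.num:ℚ) / (1 + (y.den:ℚ)) := by
    have : (y.num:ℚ) / (1 + (y.den:ℚ)) ≤ 1 := by
      rw [div_le_one (by linarith)]; linarith
    linarith
  rw [div_eq_div_iff (by linarith) h2.ne']
  field_simp
  ring

end MinkAux

namespace MinkAux

open List

lemma im_nil : insertMediants [] = [] := rfl
lemma im_single (x : ℚ) : insertMediants [x] = [x] := rfl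
lemma im_cons_cons (x y : ℚ) (rest : List ℚ) :
    insertMediants (x :: y :: rest) = x :: mediant x y :: insertMediants (y :: rest) := rfl

lemma im_head (x : ℚ) (t : List ℚ) : ∃ u, insertMediants (x :: t) = x :: u := by
  cases t with
  | nil => exact ⟨[], rfl⟩
  | cons y rest => exact ⟨_, rfl⟩

lemma im_mem {P : ℚ → Prop} (hP : ∀ a b, P a → P b → P (mediant a b)) :
    ∀ l : List ℚ, (∀ r ∈ l, P r) → ∀ r ∈ insertMediants l, P r := by
  intro l
  induction l with
  | nil => intro h r hr; simp [im_nil] at hr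
  | cons x t ih =>
    cases t with
    | nil => intro h r hr; rw [im_single] at hr; exact h r hr
    | cons y rest =>
      intro h r hr
      rw [im_cons_cons, List.mem_cons, List.mem_cons] at hr
      rcases hr with h1 | h1 | h1
      · subst h1; exact h _ (by simp)
      · subst h1; exact hP x y (h x (by simp)) (h y (by simp))
      · exact ih (fun s hs => h s (List.mem_cons_of_mem _ hs)) r h1

lemma im_length : ∀ l : List ℚ, l ≠ [] → (insertMediants l).length = 2 * l.length - 1 := by
  intro l
  induction l with
  | nil => intro h; exact absurd rfl h
  | cons x t ih =>
    cases t with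
    | nil => intro _; simp [im_single]
    | cons y rest =>
      intro _
      rw [im_cons_cons]
      have := ih (by simp)
      simp only [List.length_cons] at *
      omega

lemma im_getLast? : ∀ l : List ℚ, (insertMediants l).getLast? = l.getLast? := by
  intro l
  induction l with
  | nil => rfl
  | cons x t ih =>
    cases t with
    | nil => rfl
    | cons y rest =>
      rw [im_cons_cons]
      obtain ⟨u, hu⟩ := im_head y rest
      rw [hu] at ih ⊢
      rw [List.getLast?_cons_cons, List.getLast?_cons_cons]
      exact ih

lemma im_append : ∀ (u : List ℚ) (hu : u ≠ []) (b : ℚ) (v : List ℚ),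
    insertMediants (u ++ b :: v) =
      insertMediants u ++ mediant (u.getLast hu) b :: insertMediants (b :: v) := by
  intro u
  induction u with
  | nil => intro h; exact absurd rfl h
  | cons x t ih =>
    cases t with
    | nil =>
      intro _ b v
      simp only [List.cons_append, List.nil_append, List.getLast_singleton]
      rw [im_cons_cons, im_single]
      rfl
    | cons y rest =>
      intro _ b v
      have hih := ih (by simp) b v
      rw [List.cons_append] at hih
      rw [List.cons_append, List.cons_append, im_cons_cons, hih, im_cons_cons,
        List.getLast_cons_cons]
      simp

end MinkAux

namespace MinkAux

open List Set

lemma im_map_L : ∀ l : List ℚ, (∀ r ∈ l, 0 ≤ r) →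
    insertMediants (l.map Lq) = (insertMediants l).map Lq := by
  intro l
  induction l with
  | nil => intro _; rfl
  | cons x t ih =>
    cases t with
    | nil => intro _; rfl
    | cons y rest =>
      intro h
      simp only [List.map_cons]
      rw [im_cons_cons, im_cons_cons, med_L (h x (by simp)) (h y (by simp))]
      have := ih (fun s hs => h s (List.mem_cons_of_mem _ hs))
      simp only [List.map_cons] at this
      rw [this]
      simp

lemma im_map_R : ∀ l : List ℚ, (∀ r ∈ l, 0 ≤ r ∧ r ≤ 1) →
    insertMediants (l.map Rq) = (insertMediants l).map Rq := by
  intro l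
  induction l with
  | nil => intro _; rfl
  | cons x t ih =>
    cases t with
    | nil => intro _; rfl
    | cons y rest =>
      intro h
      simp only [List.map_cons]
      rw [im_cons_cons, im_cons_cons,
        med_R (h x (by simp)).1 (h x (by simp)).2 (h y (by simp)).1 (h y (by simp)).2]
      have := ih (fun s hs => h s (List.mem_cons_of_mem _ hs))
      simp only [List.map_cons] at this
      rw [this]
      simp

lemma minkSeq_ne_nil (n : ℕ) : minkSeq n ≠ [] := by
  induction n with
  | zero => simp [minkSeq]
  | succ n ih =>
    show insertMediants (minkSeq n) ≠ []
    obtain ⟨x, t, h⟩ := List.exists_cons_of_ne_nil ih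
    rw [h]
    obtain ⟨u, hu⟩ := im_head x t
    rw [hu]
    simp

lemma minkSeq_mem (n : ℕ) : ∀ r ∈ minkSeq n, 0 ≤ r ∧ r ≤ 1 := by
  induction n with
  | zero =>
    intro r hr
    have h2 : r = 0 ∨ r = 1 := by simpa [minkSeq] using hr
    rcases h2 with h | h <;> subst h <;> constructor <;> norm_num
  | succ n ih =>
    show ∀ r ∈ insertMediants (minkSeq n), _
    exact im_mem (fun a b ha hb => med_mem ha.1 ha.2 hb.1 hb.2) _ ih

lemma minkSeq_length (n : ℕ) : (minkSeq n).length = 2^n + 1 := by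
  induction n with
  | zero => simp [minkSeq]
  | succ n ih =>
    show (insertMediants (minkSeq n)).length = _
    rw [im_length _ (minkSeq_ne_nil n), ih]
    ring_nf
    omega

lemma minkSeq_head? (n : ℕ) : (minkSeq n).head? = some 0 := by
  induction n with
  | zero => rfl
  | succ n ih =>
    show (insertMediants (minkSeq n)).head? = some 0
    obtain ⟨x, t, h⟩ := List.exists_cons_of_ne_nil (minkSeq_ne_nil n)
    rw [h] at ih ⊢
    obtain ⟨u, hu⟩ := im_head x t
    rw [hu]
    simpa using ih

lemma minkSeq_getLast? (n : ℕ) : (minkSeq n).getLast? = some 1 := by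
  induction n with
  | zero => rfl
  | succ n ih =>
    show (insertMediants (minkSeq n)).getLast? = some 1
    rw [im_getLast?]
    exact ih

lemma minkSeq_succ (n : ℕ) :
    minkSeq (n+1) = (minkSeq n).map Lq ++ ((minkSeq n).tail).map Rq := by
  induction n with
  | zero =>
    show insertMediants (minkSeq 0) = _
    have h1 : mediant 0 1 = 1/2 := by rw [med_eq]; norm_num
    have h0 : minkSeq 0 = [0, 1] := rfl
    rw [h0, im_cons_cons, im_single, h1]
    show _ = [Lq 0, Lq 1] ++ [Rq 1]
    have e0 : Lq 0 = 0 := by norm_num [Lq]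
    have e1 : Lq 1 = 1/2 := by norm_num [Lq]
    have e2 : Rq 1 = 1 := by norm_num [Rq]
    rw [e0, e1, e2]
    rfl
  | succ n ih =>
    -- decompose s = minkSeq n
    obtain ⟨x, t, hs⟩ := List.exists_cons_of_ne_nil (minkSeq_ne_nil n)
    have hx : x = 0 := by
      have := minkSeq_head? n
      rw [hs] at this
      simpa using this
    have hlen : (minkSeq n).length = 2^n + 1 := minkSeq_length n
    have ht : t ≠ [] := by
      intro hteq
      rw [hs, hteq] at hlen
      simp only [List.length_cons, List.length_nil] at hlen
      have : 0 < 2^n := by positivity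
      omega
    obtain ⟨s₁, rest, hts⟩ := List.exists_cons_of_ne_nil ht
    have hmem := minkSeq_mem n
    have hmem1 : 0 ≤ s₁ ∧ s₁ ≤ 1 := by
      apply hmem
      rw [hs, hts]; simp
    have hmemt : ∀ r ∈ t, 0 ≤ r ∧ r ≤ 1 := by
      intro r hr
      exact hmem r (by rw [hs]; exact List.mem_cons_of_mem _ hr)
    have hlast : (minkSeq n).getLast (minkSeq_ne_nil n) = 1 := by
      have := minkSeq_getLast? n
      rw [List.getLast?_eq_getLast (minkSeq_ne_nil n)] at this
      simpa using this
    have hmapL_ne : (minkSeq n).map Lq ≠ [] := by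
      simp [minkSeq_ne_nil n]
    -- LHS
    show insertMediants (minkSeq (n+1)) = (minkSeq (n+1)).map Lq ++ ((minkSeq (n+1)).tail).map Rq
    conv_lhs => rw [ih]
    have htail : (minkSeq n).tail = s₁ :: rest := by rw [hs, hts]; rfl
    rw [htail]
    simp only [List.map_cons]
    rw [im_append ((minkSeq n).map Lq) hmapL_ne (Rq s₁) (rest.map Rq)]
    rw [im_map_L _ (fun r hr => (hmem r hr).1)]
    rw [List.getLast_map, hlast]
    rw [med_LR hmem1.1 hmem1.2]
    have him_t : insertMediants (Rq s₁ :: rest.map Rq) = (insertMediants (s₁ :: rest)).map Rq := by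
      have := im_map_R (s₁ :: rest) (by
        intro r hr
        apply hmem
        rw [hs, hts]
        exact List.mem_cons_of_mem _ hr)
      simpa using this
    rw [him_t]
    -- RHS
    have hexp : insertMediants (minkSeq n) = 0 :: mediant 0 s₁ :: insertMediants (s₁ :: rest) := by
      rw [hs, hts, hx, im_cons_cons]
    rw [show minkSeq (n+1) = insertMediants (minkSeq n) from rfl, hexp]
    simp

lemma cast_mem01 {r : ℚ} (h : 0 ≤ r ∧ r ≤ 1) : ((r:ℝ)) ∈ Icc (0:ℝ) 1 := by
  constructor <;> [exact_mod_cast h.1; exact_mod_cast h.2]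

lemma minkQ_Lq {r : ℚ} (h0 : 0 ≤ r) (h1 : r ≤ 1) :
    minkQ ((Lq r : ℚ) : ℝ) = minkQ (r:ℝ) / 2 := by
  have hX0 : (0:ℝ) ≤ (r:ℝ) := by exact_mod_cast h0
  have hX1 : (r:ℝ) ≤ 1 := by exact_mod_cast h1
  have hd : (0:ℝ) < 1 + (r:ℝ) := by linarith
  have e : ((Lq r : ℚ) : ℝ) = (r:ℝ) / (1 + (r:ℝ)) := by
    rw [Lq]; push_cast; ring
  rw [e]
  have hy0 : (0:ℝ) ≤ (r:ℝ) / (1 + (r:ℝ)) := by positivity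
  have hy1 : (r:ℝ) / (1 + (r:ℝ)) ≤ 1/2 := by
    rw [div_le_div_iff₀ hd (by norm_num)]
    linarith
  rw [minkQ_left hy0 hy1]
  have earg : (r:ℝ) / (1 + (r:ℝ)) / (1 - (r:ℝ) / (1 + (r:ℝ))) = (r:ℝ) := by
    field_simp
    ring
  rw [earg]
  ring

lemma minkQ_Rq {r : ℚ} (h0 : 0 ≤ r) (h1 : r ≤ 1) :
    minkQ ((Rq r : ℚ) : ℝ) = 1/2 + minkQ (r:ℝ) / 2 := by
  have hX0 : (0:ℝ) ≤ (r:ℝ) := by exact_mod_cast h0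
  have hX1 : (r:ℝ) ≤ 1 := by exact_mod_cast h1
  have hd : (0:ℝ) < 2 - (r:ℝ) := by linarith
  have e : ((Rq r : ℚ) : ℝ) = 1 / (2 - (r:ℝ)) := by
    rw [Rq]; push_cast; ring
  rw [e]
  have hz0 : 1/2 ≤ 1 / (2 - (r:ℝ)) := by
    rw [div_le_div_iff₀ (by norm_num) hd]
    linarith
  have hz1 : 1 / (2 - (r:ℝ)) ≤ 1 := by
    rw [div_le_one hd]
    linarith
  rw [minkQ_right hz0 hz1]
  have earg : (1 - 1 / (2 - (r:ℝ))) / (1 / (2 - (r:ℝ))) = 1 - (r:ℝ) := by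
    field_simp
    ring
  rw [earg, minkQ_symm ⟨hX0, hX1⟩]
  ring

lemma minkSeq_values (n : ℕ) :
    (minkSeq n).map (fun r : ℚ => minkQ (r:ℝ)) =
      (List.range (2^n+1)).map (fun i : ℕ => (i:ℝ)/2^n) := by
  induction n with
  | zero =>
    have : (2:ℕ)^0 + 1 = 2 := by norm_num
    rw [this]
    show [minkQ ((0:ℚ):ℝ), minkQ ((1:ℚ):ℝ)] = _
    rw [show List.range 2 = [0, 1] by decide]
    simp [minkQ_zero, minkQ_one]
  | succ n ih =>
    rw [minkSeq_succ, List.map_append, List.map_map, List.map_map]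
    have hmem := minkSeq_mem n
    have part1 : (minkSeq n).map ((fun r : ℚ => minkQ (r:ℝ)) ∘ Lq) =
        (List.range (2^n+1)).map (fun i : ℕ => ((i:ℝ)/2^n)/2) := by
      have e1 : (minkSeq n).map ((fun r : ℚ => minkQ (r:ℝ)) ∘ Lq) =
          (minkSeq n).map (fun r : ℚ => minkQ (r:ℝ) / 2) := by
        apply List.map_congr_left
        intro r hr
        exact minkQ_Lq (hmem r hr).1 (hmem r hr).2
      rw [e1]
      have e2 : (minkSeq n).map (fun r : ℚ => minkQ (r:ℝ) / 2) =
          ((minkSeq n).map (fun r : ℚ => minkQ (r:ℝ))).map (fun v => v / 2) := by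
        rw [List.map_map]; rfl
      rw [e2, ih, List.map_map]
      rfl
    have part2 : ((minkSeq n).tail).map ((fun r : ℚ => minkQ (r:ℝ)) ∘ Rq) =
        (List.range (2^n)).map (fun i : ℕ => 1/2 + (((i:ℝ)+1)/2^n)/2) := by
      have e1 : ((minkSeq n).tail).map ((fun r : ℚ => minkQ (r:ℝ)) ∘ Rq) =
          ((minkSeq n).tail).map (fun r : ℚ => 1/2 + minkQ (r:ℝ)/2) := by
        apply List.map_congr_left
        intro r hr
        have hrm : r ∈ minkSeq n := List.mem_of_mem_tail hr
        exact minkQ_Rq (hmem r hrm).1 (hmem r hrm).2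
      rw [e1]
      have e2 : ((minkSeq n).tail).map (fun r : ℚ => 1/2 + minkQ (r:ℝ)/2) =
          (((minkSeq n).map (fun r : ℚ => minkQ (r:ℝ))).tail).map (fun v => 1/2 + v/2) := by
        rw [← List.map_tail, List.map_map]; rfl
      rw [e2, ih]
      rw [List.range_succ_eq_map]
      simp only [List.map_cons, List.tail_cons, List.map_map]
      apply List.map_congr_left
      intro i _
      simp only [Function.comp_apply]
      push_cast
      ring
    rw [part1, part2]
    have hsplit : (2:ℕ)^(n+1) + 1 = (2^n + 1) + 2^n := by ring
    rw [hsplit]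
    conv_rhs => rw [List.range_add, List.map_append, List.map_map]
    congr 1
    · apply List.map_congr_left
      intro i _
      rw [pow_succ]
      ring
    · apply List.map_congr_left
      intro i _
      simp only [Function.comp_apply]
      rw [pow_succ]
      push_cast
      have h2 : (0:ℝ) < (2:ℝ)^n := by positivity
      field_simp
      ring

end MinkAux

namespace MinkAux

open List Set Filter

lemma countP_range_lt (m N : ℕ) :
    (List.range N).countP (fun i => decide (i < m)) = min m N := by
  induction N with
  | zero => simp
  | succ N ih =>
    rw [List.range_succ, List.countP_append, ih]
    by_cases h : N < m
    · simp only [List.countP_cons, List.countP_nil, decide_eq_true_eq, h]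
      simp
      omega
    · simp only [List.countP_cons, List.countP_nil, decide_eq_true_eq, h]
      simp [h]
      omega

lemma minkSeq_zero_mem (n : ℕ) : (0:ℚ) ∈ minkSeq n := by
  obtain ⟨x0, t, hs⟩ := List.exists_cons_of_ne_nil (minkSeq_ne_nil n)
  have hh := minkSeq_head? n
  rw [hs] at hh ⊢
  simp only [List.head?_cons, Option.some.injEq] at hh
  rw [← hh]
  simp

lemma main_bound (n : ℕ) (x : ℝ) (hx : x ∈ Icc (0:ℝ) 1) :
    |((minkSeq n).countP (fun r : ℚ => decide ((r:ℝ) ≤ x)) : ℝ) / (2^n + 1) - minkQ x|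
      ≤ 1/(2^n+1) := by
  set q := minkQ x with hqdef
  obtain ⟨hq0, hq1⟩ := minkQ_mem hx
  set c := (minkSeq n).countP (fun r : ℚ => decide ((r:ℝ) ≤ x)) with hcdef
  have hPpos : (0:ℝ) < 2^n := by positivity
  have hPn : (0:ℕ) < 2^n := by positivity
  have hmem := minkSeq_mem n
  -- c ≥ 1
  have hc1 : 1 ≤ c := by
    rw [hcdef]
    apply List.countP_pos_iff.mpr
    refine ⟨0, minkSeq_zero_mem n, ?_⟩
    simp only [decide_eq_true_eq, Rat.cast_zero]
    exact hx.1
  -- c ≤ length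
  have hclen : c ≤ 2^n + 1 := by
    rw [hcdef, ← minkSeq_length n]
    exact List.countP_le_length
  -- value counts
  have hval : ∀ p : ℝ → Bool,
      (minkSeq n).countP (fun r : ℚ => p (minkQ (r:ℝ))) =
        (List.range (2^n+1)).countP (fun i : ℕ => p ((i:ℝ)/2^n)) := by
    intro p
    have h1 : (minkSeq n).countP (fun r : ℚ => p (minkQ (r:ℝ))) =
        ((minkSeq n).map (fun r : ℚ => minkQ (r:ℝ))).countP p := by
      rw [List.countP_map]; rfl
    rw [h1, minkSeq_values n, List.countP_map]
    rfl
  -- upper: c ≤ floor + 1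
  have hfloor : c ≤ ⌊(2:ℝ)^n * q⌋₊ + 1 := by
    have s1 : c ≤ (minkSeq n).countP (fun r : ℚ => decide (minkQ (r:ℝ) ≤ q)) := by
      rw [hcdef]
      apply List.countP_mono_left
      intro r hr hrle
      simp only [decide_eq_true_eq] at hrle ⊢
      exact minkQ_mono (cast_mem01 (hmem r hr)) hx hrle
    have s2 : (minkSeq n).countP (fun r : ℚ => decide (minkQ (r:ℝ) ≤ q)) =
        (List.range (2^n+1)).countP (fun i : ℕ => decide ((i:ℝ)/2^n ≤ q)) :=
      hval (fun v => decide (v ≤ q))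
    have s3 : (List.range (2^n+1)).countP (fun i : ℕ => decide ((i:ℝ)/2^n ≤ q)) ≤
        (List.range (2^n+1)).countP (fun i => decide (i < ⌊(2:ℝ)^n * q⌋₊ + 1)) := by
      apply List.countP_mono_left
      intro i _ hi
      simp only [decide_eq_true_eq] at hi ⊢
      have : (i:ℝ) ≤ 2^n * q := by
        rw [div_le_iff₀ hPpos] at hi
        linarith [hi]
      have := Nat.le_floor this
      omega
    rw [countP_range_lt] at s3
    calc c ≤ _ := s1
      _ = _ := s2
      _ ≤ _ := s3
      _ ≤ ⌊(2:ℝ)^n * q⌋₊ + 1 := min_le_left _ _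
  -- lower: ceil ≤ c
  have hceil : ⌈(2:ℝ)^n * q⌉₊ ≤ c := by
    have hlen : (minkSeq n).length = 2^n + 1 := minkSeq_length n
    have hsplit := List.length_eq_countP_add_countP (fun r : ℚ => decide ((r:ℝ) ≤ x)) (l := minkSeq n)
    simp only [decide_eq_true_eq] at hsplit
    have t1 : (minkSeq n).countP (fun r : ℚ => decide ¬((r:ℝ) ≤ x)) ≤
        (minkSeq n).countP (fun r : ℚ => decide (q ≤ minkQ (r:ℝ))) := by
      apply List.countP_mono_left
      intro r hr hrgt
      simp only [decide_eq_true_eq] at hrgt ⊢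
      push_neg at hrgt
      exact minkQ_mono hx (cast_mem01 (hmem r hr)) hrgt.le
    have t2 : (minkSeq n).countP (fun r : ℚ => decide (q ≤ minkQ (r:ℝ))) =
        (List.range (2^n+1)).countP (fun i : ℕ => decide (q ≤ (i:ℝ)/2^n)) :=
      hval (fun v => decide (q ≤ v))
    have t3 := List.length_eq_countP_add_countP (fun i : ℕ => decide ((i:ℝ)/2^n < q)) (l := List.range (2^n+1))
    simp only [decide_eq_true_eq] at t3
    rw [List.length_range] at t3
    have t4 : (List.range (2^n+1)).countP (fun i : ℕ => decide ¬((i:ℝ)/2^n < q)) =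
        (List.range (2^n+1)).countP (fun i : ℕ => decide (q ≤ (i:ℝ)/2^n)) := by
      apply List.countP_congr
      intro i _
      simp only [decide_eq_true_eq, not_lt]
    have t5 : (List.range (2^n+1)).countP (fun i => decide (i < ⌈(2:ℝ)^n * q⌉₊)) ≤
        (List.range (2^n+1)).countP (fun i : ℕ => decide ((i:ℝ)/2^n < q)) := by
      apply List.countP_mono_left
      intro i _ hi
      simp only [decide_eq_true_eq] at hi ⊢
      have : (i:ℝ) < 2^n * q := by exact_mod_cast Nat.lt_ceil.mp hi
      rw [div_lt_iff₀ hPpos]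
      linarith
    rw [countP_range_lt] at t5
    have hceil_le : ⌈(2:ℝ)^n * q⌉₊ ≤ 2^n := by
      rw [Nat.ceil_le]
      calc (2:ℝ)^n * q ≤ 2^n * 1 := by nlinarith
        _ = ((2^n : ℕ) : ℝ) := by push_cast; ring
    rw [hlen] at hsplit
    rw [t4, ← t2] at t3
    omega
  -- real bounds
  have key1 : (c:ℝ) ≤ 2^n * q + 1 := by
    have h1 : (c:ℝ) ≤ (⌊(2:ℝ)^n * q⌋₊ : ℝ) + 1 := by exact_mod_cast hfloor
    have h2 : ((⌊(2:ℝ)^n * q⌋₊ : ℕ) : ℝ) ≤ 2^n * q := Nat.floor_le (by positivity)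
    linarith
  have key2 : (2:ℝ)^n * q ≤ c := by
    have h1 : ((⌈(2:ℝ)^n * q⌉₊ : ℕ) : ℝ) ≤ c := by exact_mod_cast hceil
    have h2 := Nat.le_ceil ((2:ℝ)^n * q)
    linarith
  have hP1 : (0:ℝ) < 2^n + 1 := by positivity
  have e : (c:ℝ)/(2^n+1) - q = ((c:ℝ) - q * (2^n+1))/(2^n+1) := by
    field_simp
  rw [e, abs_le]
  constructor
  · rw [neg_le, ← neg_div, div_le_div_iff₀ hP1 hP1]
    nlinarith
  · rw [div_le_div_iff₀ hP1 hP1]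
    nlinarith

end MinkAux

namespace MinkAux
open Filter Set

lemma tendsto_bound : Tendsto (fun N : ℕ => (1:ℝ)/(2^(N-1)+1)) atTop (nhds 0) := by
  have h1 : Tendsto (fun m : ℕ => (2:ℝ)^m + 1) atTop atTop :=
    tendsto_atTop_add_const_right _ 1 (tendsto_pow_atTop_atTop_of_one_lt (by norm_num : (1:ℝ) < 2))
  have h2 : Tendsto (fun N : ℕ => N - 1) atTop atTop := tendsto_sub_atTop_nat 1
  have h3 := (h1.comp h2).inv_tendsto_atTop
  simpa [Function.comp_def, one_div, Pi.inv_def] using h3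

end MinkAux


theorem empQ_tendsto_minkQ :
    (∀ N : ℕ, 1 ≤ N → ∀ x ∈ Set.Icc (0:ℝ) 1,
      |empQ N x - minkQ x| ≤ 1 / (2 ^ (N - 1) + 1)) ∧
    TendstoUniformlyOn (fun N x => empQ N x) minkQ Filter.atTop (Set.Icc (0:ℝ) 1) := by
  have hb : ∀ (N : ℕ) (x : ℝ), x ∈ Set.Icc (0:ℝ) 1 →
      |empQ N x - minkQ x| ≤ 1 / (2 ^ (N - 1) + 1) := by
    intro N x hx
    have hmb := MinkAux.main_bound (N-1) x hx
    have e0 : ∀ l : List ℚ, (l : List ℝ) = l.map (fun a : ℚ => (a:ℝ)) := by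
      intro l
      induction l with
      | nil => rfl
      | cons h t ih => simp; exact ih
    have e1 : empQ N x =
        ((minkSeq (N - 1)).countP (fun r : ℚ => decide ((r : ℝ) ≤ x)) : ℝ) / (2 ^ (N - 1) + 1) := by
      rw [empQ]
      congr 2
      rw [e0, List.countP_map]
      rfl
    rw [e1]
    exact hmb
  constructor
  · intro N _ x hx; exact hb N x hx
  · rw [Metric.tendstoUniformlyOn_iff]
    intro ε hε
    have h2 : ∀ᶠ N : ℕ in Filter.atTop, (1:ℝ)/(2^(N-1)+1) < ε :=
      MinkAux.tendsto_bound.eventually_lt_const hε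
    filter_upwards [h2] with N hN x hx
    rw [Real.dist_eq, abs_sub_comm]
    exact lt_of_le_of_lt (hb N x hx) hN
end
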